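/- The additive function f(n) = ln h(n) possesses a limiting distribution: there exists a nondecreasing, right-continuous function F : ℝ → [0,1] with F(t) → 0 as t → −∞ and F(t) → 1 as t → +∞, such that for every point t at which F is continuous, (1/x)·#{n ≤ x : ln h(n) ≤ t} → F(t) as x → ∞. -/

import Mathlib

open Filter Topology
open scoped Classical

/-- `h n = ∏_{p ∣ n, p odd prime} (p-1)/(p-2)`, with `h n = 1` when `n` has no odd prime
divisor. -/
noncomputable def h (n : ℕ) : ℝ :=
  ∏ p ∈ n.primeFactors.filter (fun p => 2 < p), ((p : ℝ) - 1) / ((p : ℝ) - 2)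

namespace LHD

noncomputable def g (p : ℕ) : ℝ := Real.log (((p : ℝ) - 1) / ((p : ℝ) - 2))

lemma g_nonneg {p : ℕ} (hp : 3 ≤ p) : 0 ≤ g p := by
  have h3 : (3 : ℝ) ≤ (p : ℝ) := by exact_mod_cast hp
  apply Real.log_nonneg
  rw [le_div_iff₀ (by linarith)]
  linarith

lemma g_le {p : ℕ} (hp : 3 ≤ p) : g p ≤ 3 / (p : ℝ) := by
  have h3 : (3 : ℝ) ≤ (p : ℝ) := by exact_mod_cast hp
  have hpos : (0 : ℝ) < ((p : ℝ) - 1) / ((p : ℝ) - 2) := by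
    apply div_pos <;> linarith
  have h1 : g p ≤ ((p : ℝ) - 1) / ((p : ℝ) - 2) - 1 := Real.log_le_sub_one_of_pos hpos
  have hne : (p : ℝ) - 2 ≠ 0 := by linarith
  have h2 : ((p : ℝ) - 1) / ((p : ℝ) - 2) - 1 = 1 / ((p : ℝ) - 2) := by
    rw [div_sub_one hne]; ring_nf
  rw [h2] at h1
  refine h1.trans ?_
  rw [div_le_div_iff₀ (by linarith) (by linarith)]
  linarith

def Q (n : ℕ) : Finset ℕ := n.primeFactors.filter (fun p => 2 < p)

lemma mem_Q {n p : ℕ} : p ∈ Q n ↔ p.Prime ∧ p ∣ n ∧ n ≠ 0 ∧ 2 < p := by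
  simp only [Q, Finset.mem_filter, Nat.mem_primeFactors]
  tauto

lemma log_h (n : ℕ) : Real.log (h n) = ∑ p ∈ Q n, g p := by
  rw [h, Real.log_prod]
  · rfl
  · intro p hp
    have h3 : 3 ≤ p := (Finset.mem_filter.1 hp).2
    have h3' : (3 : ℝ) ≤ (p : ℝ) := by exact_mod_cast h3
    apply div_ne_zero <;> intro hc <;> linarith [hc]

def Pr (y : ℕ) : Finset ℕ := (Finset.Icc 3 y).filter Nat.Prime

lemma mem_Pr {y p : ℕ} : p ∈ Pr y ↔ 3 ≤ p ∧ p ≤ y ∧ p.Prime := by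
  simp only [Pr, Finset.mem_filter, Finset.mem_Icc]; tauto

def Per (y : ℕ) : ℕ := ∏ p ∈ Pr y, p

lemma Per_pos (y : ℕ) : 0 < Per y :=
  Finset.prod_pos fun p hp => by have := (mem_Pr.1 hp).1; omega

lemma dvd_Per {y p : ℕ} (hp : p ∈ Pr y) : p ∣ Per y := Finset.dvd_prod_of_mem _ hp

lemma Pr_mono {y y' : ℕ} (h : y ≤ y') : Pr y ⊆ Pr y' := by
  intro p hp; rw [mem_Pr] at *; exact ⟨hp.1, hp.2.1.trans h, hp.2.2⟩

lemma Per_dvd {y y' : ℕ} (h : y ≤ y') : Per y ∣ Per y' :=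
  Finset.prod_dvd_prod_of_subset _ _ _ (Pr_mono h)

noncomputable def vv (y ρ : ℕ) : ℝ := ∑ p ∈ (Pr y).filter (· ∣ ρ), g p

lemma vv_nonneg (y ρ : ℕ) : 0 ≤ vv y ρ :=
  Finset.sum_nonneg fun p hp => g_nonneg (mem_Pr.1 (Finset.mem_filter.1 hp).1).1

lemma vv_mod (y n : ℕ) : vv y (n % Per y) = vv y n := by
  unfold vv
  congr 1
  apply Finset.filter_congr
  intro p hp
  simpa using Nat.dvd_mod_iff (dvd_Per hp)

lemma vv_mono_y {y y' : ℕ} (h : y ≤ y') (ρ : ℕ) : vv y ρ ≤ vv y' ρ := by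
  apply Finset.sum_le_sum_of_subset_of_nonneg
  · exact Finset.filter_subset_filter _ (Pr_mono h)
  · intro p hp _; exact g_nonneg (mem_Pr.1 (Finset.mem_filter.1 hp).1).1

lemma card_blocks (Q : ℕ → Prop) (P k : ℕ) :
    ((Finset.range (k * P)).filter (fun a => Q (a % P))).card
      = k * ((Finset.range P).filter Q).card := by
  induction k with
  | zero => simp
  | succ k ih =>
    rw [Nat.succ_mul, Finset.range_add, Finset.filter_union,
      Finset.card_union_of_disjoint, ih, Finset.filter_map, Finset.card_map]
    · have hmap : (Finset.filter ((fun a => Q (a % P)) ∘ ⇑(addLeftEmbedding (k * P)))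
          (Finset.range P)).card = ((Finset.range P).filter Q).card := by
        congr 1
        apply Finset.filter_congr
        intro a ha
        rw [Finset.mem_range] at ha
        simp only [Function.comp_apply, addLeftEmbedding_apply]
        rw [add_comm, Nat.add_mul_mod_self_right, Nat.mod_eq_of_lt ha]
      rw [hmap]; ring
    · rw [Finset.disjoint_left]
      intro a ha hb
      have h1 := Finset.mem_range.1 (Finset.mem_of_mem_filter _ ha)
      have h2 := Finset.mem_of_mem_filter _ hb
      rw [Finset.mem_map] at h2
      obtain ⟨b, hb', rfl⟩ := h2
      simp only [addLeftEmbedding_apply] at h1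
      omega

lemma card_blocks_dvd (Q : ℕ → Prop) {P N : ℕ} (hP : 0 < P) (h : P ∣ N) :
    ((Finset.range N).filter (fun a => Q (a % P))).card
      = (N / P) * ((Finset.range P).filter Q).card := by
  obtain ⟨k, rfl⟩ := h
  rw [Nat.mul_div_cancel_left _ hP, mul_comm P k, card_blocks]

lemma card_range_dvd {p P : ℕ} (hp : 0 < p) (h : p ∣ P) :
    ((Finset.range P).filter (p ∣ ·)).card = P / p := by
  have : (Finset.range P).filter (p ∣ ·) = (Finset.range (P / p)).image (p * ·) := by
    ext a
    simp only [Finset.mem_filter, Finset.mem_range, Finset.mem_image]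
    constructor
    · rintro ⟨haP, i, rfl⟩
      exact ⟨i, by rw [Nat.lt_div_iff_mul_lt' h _]; omega, rfl⟩
    · rintro ⟨i, hi, rfl⟩
      rw [Nat.lt_div_iff_mul_lt' h _] at hi
      exact ⟨by omega, ⟨i, rfl⟩⟩
  rw [this, Finset.card_image_of_injective _ (mul_right_injective₀ hp.ne'), Finset.card_range]

lemma sum_swap_dvd (A B : Finset ℕ) (w : ℕ → ℝ) :
    ∑ a ∈ A, ∑ p ∈ B.filter (· ∣ a), w p
      = ∑ p ∈ B, w p * ((A.filter (p ∣ ·)).card : ℝ) := by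
  simp_rw [Finset.sum_filter]
  rw [Finset.sum_comm]
  apply Finset.sum_congr rfl
  intro p _
  rw [← Finset.sum_filter, Finset.sum_const, nsmul_eq_mul, mul_comm]

lemma markov (A : Finset ℕ) (r : ℕ → ℝ) (hr : ∀ a ∈ A, 0 ≤ r a) {ε : ℝ} (hε : 0 < ε) :
    ((A.filter (fun a => ε < r a)).card : ℝ) * ε ≤ ∑ a ∈ A, r a := by
  calc ((A.filter (fun a => ε < r a)).card : ℝ) * ε
      = ∑ _a ∈ A.filter (fun a => ε < r a), ε := by rw [Finset.sum_const, nsmul_eq_mul]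
    _ ≤ ∑ a ∈ A.filter (fun a => ε < r a), r a :=
        Finset.sum_le_sum fun a ha => (Finset.mem_filter.1 ha).2.le
    _ ≤ ∑ a ∈ A, r a :=
        Finset.sum_le_sum_of_subset_of_nonneg (Finset.filter_subset _ _)
          (fun a ha _ => hr a ha)

lemma count_tendsto (Q : ℕ → Prop) {P : ℕ} (hP : 0 < P) :
    Tendsto (fun x : ℕ => (((Finset.Icc 1 x).filter (fun n => Q (n % P))).card : ℝ) / x)
      atTop (𝓝 ((((Finset.range P).filter Q).card : ℝ) / P)) := by
  set c := ((Finset.range P).filter Q).card with hc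
  have hcP : c ≤ P := by
    calc c ≤ (Finset.range P).card := Finset.card_filter_le _ _
      _ = P := Finset.card_range P
  have key : ∀ x : ℕ, 1 ≤ x →
      |(((Finset.Icc 1 x).filter (fun n => Q (n % P))).card : ℝ) - x * c / P| ≤ 3 * P := by
    intro x hx
    set m := ((Finset.Icc 1 x).filter (fun n => Q (n % P))).card with hm
    set mR := ((Finset.range (x + 1)).filter (fun n => Q (n % P))).card with hmR
    set k := (x + 1) / P with hk
    have hIcc : Finset.range (x + 1) = insert 0 (Finset.Icc 1 x) := by
      ext a; simp only [Finset.mem_range, Finset.mem_insert, Finset.mem_Icc]; omega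
    have hm1 : mR ≤ m + 1 := by
      rw [hmR, hIcc, Finset.filter_insert]
      split
      · exact Finset.card_insert_le _ _
      · omega
    have hm2 : m ≤ mR := by
      apply Finset.card_le_card
      apply Finset.filter_subset_filter
      rw [hIcc]; exact Finset.subset_insert _ _
    have hdm := Nat.div_add_mod (x + 1) P
    have hmod := Nat.mod_lt (x + 1) hP
    rw [← hk] at hdm
    have h1 : P * k ≤ x + 1 := by omega
    have h2 : x + 1 < P * (k + 1) := by rw [Nat.mul_succ]; omega
    have hlow : k * c ≤ mR := by
      have hsub : Finset.range (P * k) ⊆ Finset.range (x + 1) :=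
        Finset.range_subset_range.2 (by omega)
      have := card_blocks_dvd Q hP (Dvd.intro k rfl)
      rw [Nat.mul_div_cancel_left _ hP] at this
      calc k * c = ((Finset.range (P * k)).filter (fun a => Q (a % P))).card := this.symm
        _ ≤ mR := Finset.card_le_card (Finset.filter_subset_filter _ hsub)
    have hhigh : mR ≤ (k + 1) * c := by
      have hsub : Finset.range (x + 1) ⊆ Finset.range (P * (k + 1)) :=
        Finset.range_subset_range.2 (by omega)
      have := card_blocks_dvd Q hP (Dvd.intro (k + 1) rfl)
      rw [Nat.mul_div_cancel_left _ hP] at this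
      calc mR ≤ ((Finset.range (P * (k + 1))).filter (fun a => Q (a % P))).card :=
            Finset.card_le_card (Finset.filter_subset_filter _ hsub)
        _ = (k + 1) * c := this
    -- cast to reals
    have hPR : (0 : ℝ) < P := by exact_mod_cast hP
    have A1 : (k : ℝ) * c ≤ (m : ℝ) + 1 := by exact_mod_cast (hlow.trans hm1)
    have A2 : (m : ℝ) ≤ ((k : ℝ) + 1) * c := by exact_mod_cast (hm2.trans hhigh)
    have A3 : (P : ℝ) * k ≤ (x : ℝ) + 1 := by exact_mod_cast h1
    have A4 : (x : ℝ) + 1 ≤ (P : ℝ) * (k + 1) := by exact_mod_cast h2.le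
    have A5 : (c : ℝ) ≤ (P : ℝ) := by exact_mod_cast hcP
    have A6 : (0 : ℝ) ≤ (c : ℝ) := Nat.cast_nonneg c
    have hP1 : (1 : ℝ) ≤ (P : ℝ) := by exact_mod_cast hP
    have B1 : (x : ℝ) * c / P ≤ ((k : ℝ) + 1) * c := by
      rw [div_le_iff₀ hPR]
      nlinarith [mul_le_mul_of_nonneg_right A4 A6]
    have B2 : (k : ℝ) * c - c ≤ (x : ℝ) * c / P := by
      rw [le_div_iff₀ hPR]
      nlinarith [mul_le_mul_of_nonneg_right A3 A6, mul_le_mul_of_nonneg_right hP1 A6]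
    rw [abs_le]
    constructor <;> [nlinarith [A1, B1, A5, hP1]; nlinarith [A2, B2, A5, hP1]]
  rw [tendsto_iff_norm_sub_tendsto_zero]
  apply squeeze_zero' (Eventually.of_forall fun x => norm_nonneg _)
    ?_ (tendsto_const_div_atTop_nhds_zero_nat (3 * (P : ℝ)))
  filter_upwards [eventually_ge_atTop 1] with x hx
  have hxR : (0 : ℝ) < x := by exact_mod_cast hx
  have heq : (((Finset.Icc 1 x).filter (fun n => Q (n % P))).card : ℝ) / x - c / P
      = ((((Finset.Icc 1 x).filter (fun n => Q (n % P))).card : ℝ) - x * c / P) / x := by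
    rw [sub_div]
    congr 1
    rw [mul_div_assoc, mul_div_cancel_left₀ _ hxR.ne']
  rw [Real.norm_eq_abs, heq, abs_div, abs_of_pos hxR]
  exact div_le_div_of_nonneg_right (key x hx) hxR.le

noncomputable def cnt (y : ℕ) (t : ℝ) : ℕ :=
  ((Finset.range (Per y)).filter (fun ρ => vv y ρ ≤ t)).card

noncomputable def Fy (y : ℕ) (t : ℝ) : ℝ := (cnt y t : ℝ) / (Per y : ℝ)

noncomputable def FF (t : ℝ) : ℝ := ⨅ y : ℕ, Fy y t

lemma PerR_pos (y : ℕ) : (0 : ℝ) < (Per y : ℝ) := by exact_mod_cast Per_pos y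

lemma Fy_nonneg (y : ℕ) (t : ℝ) : 0 ≤ Fy y t :=
  div_nonneg (Nat.cast_nonneg _) (Nat.cast_nonneg _)

lemma cnt_le (y : ℕ) (t : ℝ) : cnt y t ≤ Per y := by
  calc cnt y t ≤ (Finset.range (Per y)).card := Finset.card_filter_le _ _
    _ = Per y := Finset.card_range _

lemma Fy_le_one (y : ℕ) (t : ℝ) : Fy y t ≤ 1 := by
  rw [Fy, div_le_one (PerR_pos y)]
  exact_mod_cast cnt_le y t

lemma Fy_mono (y : ℕ) : Monotone (Fy y) := by
  intro a b hab
  apply div_le_div_of_nonneg_right _ (PerR_pos y).le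
  have : cnt y a ≤ cnt y b :=
    Finset.card_le_card (Finset.monotone_filter_right _ (fun ρ _ hρ => hρ.trans hab))
  exact_mod_cast this

lemma Fy_anti (t : ℝ) : Antitone (fun y => Fy y t) := by
  intro y y' hyy'
  simp only
  have hdvd := Per_dvd hyy'
  have key : cnt y' t ≤ (Per y' / Per y) * cnt y t := by
    have hsub : (Finset.range (Per y')).filter (fun ρ => vv y' ρ ≤ t)
        ⊆ (Finset.range (Per y')).filter (fun ρ => vv y (ρ % Per y) ≤ t) := by
      apply Finset.monotone_filter_right
      intro ρ _ hρ
      rw [vv_mod]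
      exact (vv_mono_y hyy' ρ).trans hρ
    calc cnt y' t ≤ ((Finset.range (Per y')).filter (fun ρ => vv y (ρ % Per y) ≤ t)).card :=
          Finset.card_le_card hsub
      _ = (Per y' / Per y) * cnt y t := card_blocks_dvd (fun ρ => vv y ρ ≤ t) (Per_pos y) hdvd
  have hkeyR : (cnt y' t : ℝ) ≤ (Per y' : ℝ) / (Per y : ℝ) * (cnt y t : ℝ) := by
    calc (cnt y' t : ℝ) ≤ ((Per y' / Per y * cnt y t : ℕ) : ℝ) := by exact_mod_cast key
      _ = (Per y' : ℝ) / (Per y : ℝ) * (cnt y t : ℝ) := by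
          rw [Nat.cast_mul, Nat.cast_div hdvd (PerR_pos y).ne']
  have h2 := mul_le_mul_of_nonneg_right hkeyR (PerR_pos y).le
  rw [mul_right_comm, div_mul_cancel₀ _ (PerR_pos y).ne'] at h2
  rw [Fy, Fy, div_le_div_iff₀ (PerR_pos y') (PerR_pos y)]
  linarith

lemma Fy_neg {t : ℝ} (ht : t < 0) (y : ℕ) : Fy y t = 0 := by
  have hz : cnt y t = 0 := by
    rw [cnt, Finset.card_eq_zero, Finset.filter_eq_empty_iff]
    intro ρ _ hρ
    exact absurd hρ (not_le.2 (ht.trans_le (vv_nonneg y ρ)))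
  rw [Fy, hz]
  simp

lemma sum_inv_sq_Ioc (k n : ℕ) (hk : k ≠ 0) :
    (∑ m ∈ Finset.Ioc k n, ((m : ℝ) ^ 2)⁻¹) ≤ ((k : ℝ))⁻¹ := by
  rcases le_or_gt k n with hkn | hkn
  · refine (sum_Ioc_inv_sq_le_sub hk hkn).trans ?_
    have : (0:ℝ) ≤ ((n : ℝ))⁻¹ := by positivity
    linarith
  · rw [Finset.Ioc_eq_empty (by omega), Finset.sum_empty]
    positivity

lemma sum_vv_le (y : ℕ) : ∑ ρ ∈ Finset.range (Per y), vv y ρ ≤ 2 * (Per y : ℝ) := by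
  simp only [vv]
  rw [sum_swap_dvd]
  have step1 : ∀ p ∈ Pr y, g p * (((Finset.range (Per y)).filter (p ∣ ·)).card : ℝ)
      ≤ 3 * (Per y : ℝ) * ((p : ℝ) ^ 2)⁻¹ := by
    intro p hp
    obtain ⟨h3, hy, hprime⟩ := mem_Pr.1 hp
    have hppos : 0 < p := by omega
    have hpR : (0:ℝ) < (p : ℝ) := by exact_mod_cast hppos
    rw [card_range_dvd hppos (dvd_Per hp)]
    have hcast : ((Per y / p : ℕ) : ℝ) = (Per y : ℝ) / (p : ℝ) :=
      Nat.cast_div (dvd_Per hp) hpR.ne'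
    rw [hcast]
    have h1 : g p * ((Per y : ℝ) / (p : ℝ)) ≤ (3 / (p:ℝ)) * ((Per y : ℝ) / (p : ℝ)) := by
      apply mul_le_mul_of_nonneg_right (g_le h3)
      positivity
    refine h1.trans (le_of_eq ?_)
    rw [pow_two, mul_inv]
    field_simp
  calc ∑ p ∈ Pr y, g p * (((Finset.range (Per y)).filter (p ∣ ·)).card : ℝ)
      ≤ ∑ p ∈ Pr y, 3 * (Per y : ℝ) * ((p : ℝ) ^ 2)⁻¹ := Finset.sum_le_sum step1
    _ ≤ ∑ m ∈ Finset.Ioc 2 y, 3 * (Per y : ℝ) * ((m : ℝ) ^ 2)⁻¹ := by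
        apply Finset.sum_le_sum_of_subset_of_nonneg
        · intro p hp
          obtain ⟨h3, hy, _⟩ := mem_Pr.1 hp
          rw [Finset.mem_Ioc]; omega
        · intro m _ _; positivity
    _ = 3 * (Per y : ℝ) * ∑ m ∈ Finset.Ioc 2 y, ((m : ℝ) ^ 2)⁻¹ := by
        rw [Finset.mul_sum]
    _ ≤ 3 * (Per y : ℝ) * (2 : ℝ)⁻¹ := by
        apply mul_le_mul_of_nonneg_left ?_ (by positivity)
        exact_mod_cast sum_inv_sq_Ioc 2 y (by norm_num)
    _ ≤ 2 * (Per y : ℝ) := by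
        have := (PerR_pos y).le
        linarith

lemma Fy_markov {t : ℝ} (ht : 0 < t) (y : ℕ) : 1 - 2 / t ≤ Fy y t := by
  have hmar := markov (Finset.range (Per y)) (vv y) (fun ρ _ => vv_nonneg y ρ) ht
  have hsum := sum_vv_le y
  have hsplit := Finset.card_filter_add_card_filter_not
      (s := Finset.range (Per y)) (p := fun ρ => vv y ρ ≤ t)
  have hneg : ((Finset.range (Per y)).filter (fun ρ => ¬ vv y ρ ≤ t)).card
      = ((Finset.range (Per y)).filter (fun ρ => t < vv y ρ)).card := by
    congr 1
    apply Finset.filter_congr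
    intro ρ _
    simp only [not_le]
  rw [hneg, Finset.card_range] at hsplit
  have hPpos := PerR_pos y
  have hcardle : (((Finset.range (Per y)).filter (fun ρ => t < vv y ρ)).card : ℝ)
      ≤ 2 * (Per y : ℝ) / t := by
    rw [le_div_iff₀ ht]
    exact hmar.trans hsum
  have hcntR : (cnt y t : ℝ)
      = (Per y : ℝ) - (((Finset.range (Per y)).filter (fun ρ => t < vv y ρ)).card : ℝ) := by
    have hcast := congrArg (fun n : ℕ => (n : ℝ)) hsplit
    push_cast at hcast
    rw [cnt]
    linarith
  rw [Fy, le_div_iff₀ hPpos]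
  have h2t : 2 * (Per y : ℝ) / t = 2 / t * (Per y : ℝ) := by ring
  rw [h2t] at hcardle
  nlinarith

lemma Fy_bdd (t : ℝ) : BddBelow (Set.range fun y => Fy y t) := by
  refine ⟨0, ?_⟩
  rintro _ ⟨y, rfl⟩
  exact Fy_nonneg y t

lemma FF_le_Fy (t : ℝ) (y : ℕ) : FF t ≤ Fy y t := ciInf_le (Fy_bdd t) y

lemma FF_nonneg (t : ℝ) : 0 ≤ FF t := le_ciInf fun y => Fy_nonneg y t

lemma FF_le_one (t : ℝ) : FF t ≤ 1 := (FF_le_Fy t 0).trans (Fy_le_one 0 t)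

lemma FF_mono : Monotone FF := fun a b hab =>
  le_ciInf fun y => (FF_le_Fy a y).trans (Fy_mono y hab)

lemma FF_neg {t : ℝ} (ht : t < 0) : FF t = 0 :=
  le_antisymm (by rw [← Fy_neg ht 0]; exact FF_le_Fy t 0) (FF_nonneg t)

lemma FF_ge {t : ℝ} (ht : 0 < t) : 1 - 2 / t ≤ FF t :=
  le_ciInf fun y => Fy_markov ht y

lemma FF_tendsto_Fy (t : ℝ) : Tendsto (fun y => Fy y t) atTop (𝓝 (FF t)) :=
  tendsto_atTop_ciInf (Fy_anti t) (Fy_bdd t)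

lemma FF_atBot : Tendsto FF atBot (𝓝 0) := by
  apply Tendsto.congr' (f₁ := fun _ => (0 : ℝ))
  · filter_upwards [eventually_lt_atBot (0 : ℝ)] with t ht
    exact (FF_neg ht).symm
  · exact tendsto_const_nhds

lemma FF_atTop : Tendsto FF atTop (𝓝 1) := by
  have h1 : Tendsto (fun t : ℝ => 1 - 2 / t) atTop (𝓝 1) := by
    have : Tendsto (fun t : ℝ => 2 / t) atTop (𝓝 0) :=
      Tendsto.div_atTop tendsto_const_nhds tendsto_id
    simpa using tendsto_const_nhds.sub this
  apply tendsto_of_tendsto_of_tendsto_of_le_of_le' h1 tendsto_const_nhds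
  · filter_upwards [eventually_gt_atTop (0 : ℝ)] with t ht
    exact FF_ge ht
  · exact Eventually.of_forall fun t => FF_le_one t

lemma Fy_loc_const (y : ℕ) (t : ℝ) : ∃ s, t < s ∧ Fy y s = Fy y t := by
  set W := (((Finset.range (Per y)).image (vv y)).filter (fun v => t < v)) with hW
  have key : ∃ s, t < s ∧ ∀ ρ ∈ Finset.range (Per y), (vv y ρ ≤ s ↔ vv y ρ ≤ t) := by
    rcases W.eq_empty_or_nonempty with hWe | hWne
    · refine ⟨t + 1, by linarith, fun ρ hρ => ?_⟩
      have hle : vv y ρ ≤ t := by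
        by_contra hc
        have : vv y ρ ∈ W := by
          rw [hW, Finset.mem_filter]
          exact ⟨Finset.mem_image_of_mem _ hρ, not_le.1 hc⟩
        rw [hWe] at this
        exact absurd this (Finset.notMem_empty _)
      constructor
      · intro _; exact hle
      · intro _; linarith
    · have hmin' := W.min'_mem hWne
      have hmin : t < W.min' hWne := (Finset.mem_filter.1 hmin').2
      refine ⟨(t + W.min' hWne) / 2, by linarith, fun ρ hρ => ?_⟩
      constructor
      · intro hs
        by_contra hc
        have hmem : vv y ρ ∈ W := by
          rw [hW, Finset.mem_filter]
          exact ⟨Finset.mem_image_of_mem _ hρ, not_le.1 hc⟩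
        have := W.min'_le _ hmem
        linarith
      · intro hle
        linarith
  obtain ⟨s, hts, hiff⟩ := key
  refine ⟨s, hts, ?_⟩
  simp only [Fy, cnt]
  rw [Finset.filter_congr hiff]

lemma FF_right_continuous (t : ℝ) : ContinuousWithinAt FF (Set.Ici t) t := by
  rw [ContinuousWithinAt]
  apply tendsto_order.2
  constructor
  · intro a ha
    filter_upwards [self_mem_nhdsWithin] with u hu
    exact ha.trans_le (FF_mono hu)
  · intro b hb
    obtain ⟨y, hy⟩ := exists_lt_of_ciInf_lt hb
    obtain ⟨s, hts, hFys⟩ := Fy_loc_const y t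
    have hmem : Set.Ico t s ∈ 𝓝[Set.Ici t] t := Ico_mem_nhdsGE hts
    filter_upwards [hmem] with u hu
    calc FF u ≤ Fy y u := FF_le_Fy u y
      _ ≤ Fy y s := Fy_mono y hu.2.le
      _ = Fy y t := hFys
      _ < b := hy

noncomputable def tl (y n : ℕ) : ℝ := ∑ p ∈ (Q n).filter (fun p => y < p), g p

lemma tl_nonneg (y n : ℕ) : 0 ≤ tl y n :=
  Finset.sum_nonneg fun p hp =>
    g_nonneg (by have := (mem_Q.1 (Finset.mem_of_mem_filter _ hp)).2.2.2; omega)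

lemma ff_split (y : ℕ) {n : ℕ} (hn : 1 ≤ n) :
    Real.log (h n) = vv y n + tl y n := by
  rw [log_h, tl, vv]
  rw [← Finset.sum_filter_add_sum_filter_not (Q n) (fun p => p ≤ y)]
  congr 1
  · congr 1
    ext q
    simp only [Finset.mem_filter, mem_Q, mem_Pr]
    constructor
    · rintro ⟨⟨hq, hqn, _, h2⟩, hqy⟩
      exact ⟨⟨by omega, hqy, hq⟩, hqn⟩
    · rintro ⟨⟨h3, hqy, hq⟩, hqn⟩
      exact ⟨⟨hq, hqn, by omega, by omega⟩, hqy⟩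
  · congr 1
    apply Finset.filter_congr
    intro q _
    simp [not_le]

lemma vv_le_ff (y : ℕ) {n : ℕ} (hn : 1 ≤ n) : vv y n ≤ Real.log (h n) := by
  rw [ff_split y hn]
  linarith [tl_nonneg y n]

lemma tl_sum_le {y : ℕ} (hy : 2 ≤ y) (x : ℕ) :
    ∑ n ∈ Finset.Icc 1 x, tl y n ≤ 3 * (x : ℝ) / y := by
  have hIcc : Finset.Icc 1 x = Finset.Ioc 0 x := by ext a; simp only [Finset.mem_Icc, Finset.mem_Ioc]; omega
  set B := (Finset.Ioc y x).filter Nat.Prime with hB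
  have heq : ∀ n ∈ Finset.Icc 1 x, tl y n = ∑ p ∈ B.filter (· ∣ n), g p := by
    intro n hn
    rw [Finset.mem_Icc] at hn
    rw [tl]
    congr 1
    ext q
    simp only [hB, Finset.mem_filter, mem_Q, Finset.mem_Ioc, Finset.filter_filter]
    constructor
    · rintro ⟨⟨hq, hqn, hn0, h2⟩, hqy⟩
      exact ⟨⟨hqy, (Nat.le_of_dvd (by omega) hqn).trans hn.2⟩, hq, hqn⟩
    · rintro ⟨⟨hqy, hqx⟩, hq, hqn⟩
      exact ⟨⟨hq, hqn, by omega, by omega⟩, hqy⟩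
  rw [Finset.sum_congr rfl heq, sum_swap_dvd]
  have step : ∀ p ∈ B, g p * (((Finset.Icc 1 x).filter (p ∣ ·)).card : ℝ)
      ≤ 3 * (x : ℝ) * ((p : ℝ) ^ 2)⁻¹ := by
    intro p hp
    rw [hB, Finset.mem_filter, Finset.mem_Ioc] at hp
    obtain ⟨⟨hyp, hpx⟩, hprime⟩ := hp
    have h3 : 3 ≤ p := by omega
    have hp0 : (0:ℝ) < (p:ℝ) := by exact_mod_cast (by omega : 0 < p)
    rw [hIcc, Nat.Ioc_filter_dvd_card_eq_div]
    have hc : ((x / p : ℕ) : ℝ) ≤ (x : ℝ) / (p : ℝ) := Nat.cast_div_le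
    calc g p * ((x / p : ℕ) : ℝ) ≤ (3 / (p:ℝ)) * ((x:ℝ) / (p:ℝ)) :=
          mul_le_mul (g_le h3) hc (Nat.cast_nonneg _) (by positivity)
      _ = 3 * (x : ℝ) * ((p : ℝ) ^ 2)⁻¹ := by
          rw [pow_two, mul_inv]; ring
  calc ∑ p ∈ B, g p * (((Finset.Icc 1 x).filter (p ∣ ·)).card : ℝ)
      ≤ ∑ p ∈ B, 3 * (x : ℝ) * ((p : ℝ) ^ 2)⁻¹ := Finset.sum_le_sum step
    _ ≤ ∑ m ∈ Finset.Ioc y x, 3 * (x : ℝ) * ((m : ℝ) ^ 2)⁻¹ := by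
        apply Finset.sum_le_sum_of_subset_of_nonneg (Finset.filter_subset _ _)
        intro m _ _; positivity
    _ = 3 * (x : ℝ) * ∑ m ∈ Finset.Ioc y x, ((m : ℝ) ^ 2)⁻¹ := by rw [Finset.mul_sum]
    _ ≤ 3 * (x : ℝ) * ((y : ℝ))⁻¹ := by
        apply mul_le_mul_of_nonneg_left (sum_inv_sq_Ioc y x (by omega)) (by positivity)
    _ = 3 * (x : ℝ) / y := by rw [div_eq_mul_inv]

noncomputable def Acnt (t : ℝ) (x : ℕ) : ℕ :=
  ((Finset.Icc 1 x).filter (fun n => Real.log (h n) ≤ t)).card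

noncomputable def Ay (y : ℕ) (u : ℝ) (x : ℕ) : ℕ :=
  ((Finset.Icc 1 x).filter (fun n => vv y n ≤ u)).card

lemma Acnt_le_Ay (t : ℝ) (y x : ℕ) : Acnt t x ≤ Ay y t x := by
  apply Finset.card_le_card
  intro n hn
  rw [Finset.mem_filter] at *
  have h1 : 1 ≤ n := (Finset.mem_Icc.1 hn.1).1
  exact ⟨hn.1, (vv_le_ff y h1).trans hn.2⟩

lemma Ay_le (y x : ℕ) {s t : ℝ} (hst : s < t) :
    Ay y s x ≤ Acnt t x + ((Finset.Icc 1 x).filter (fun n => t - s < tl y n)).card := by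
  have hsub : (Finset.Icc 1 x).filter (fun n => vv y n ≤ s)
      ⊆ ((Finset.Icc 1 x).filter (fun n => Real.log (h n) ≤ t))
        ∪ ((Finset.Icc 1 x).filter (fun n => t - s < tl y n)) := by
    intro n hn
    rw [Finset.mem_filter] at hn
    have h1 : 1 ≤ n := (Finset.mem_Icc.1 hn.1).1
    rw [Finset.mem_union, Finset.mem_filter, Finset.mem_filter]
    by_cases hc : Real.log (h n) ≤ t
    · exact Or.inl ⟨hn.1, hc⟩
    · right
      refine ⟨hn.1, ?_⟩
      have := ff_split y h1
      rw [not_le] at hc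
      have hvv := hn.2
      linarith
  calc Ay y s x ≤ (((Finset.Icc 1 x).filter (fun n => Real.log (h n) ≤ t))
        ∪ ((Finset.Icc 1 x).filter (fun n => t - s < tl y n))).card :=
        Finset.card_le_card hsub
    _ ≤ _ := Finset.card_union_le _ _

lemma tail_card_le {y : ℕ} (hy : 2 ≤ y) (x : ℕ) {ε : ℝ} (hε : 0 < ε) :
    (((Finset.Icc 1 x).filter (fun n => ε < tl y n)).card : ℝ) * ε ≤ 3 * (x : ℝ) / y :=
  (markov _ _ (fun n _ => tl_nonneg y n) hε).trans (tl_sum_le hy x)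

lemma Ay_tendsto (y : ℕ) (u : ℝ) :
    Tendsto (fun x : ℕ => (Ay y u x : ℝ) / x) atTop (𝓝 (Fy y u)) := by
  have hconv := count_tendsto (fun ρ => vv y ρ ≤ u) (Per_pos y)
  have heq : ∀ x : ℕ, Ay y u x
      = ((Finset.Icc 1 x).filter (fun n => vv y (n % Per y) ≤ u)).card := by
    intro x
    rw [Ay]
    congr 1
    apply Finset.filter_congr
    intro n _
    rw [vv_mod]
  apply hconv.congr'
  filter_upwards with x
  rw [heq x]

end LHD

/-- The additive function `f(n) = ln h(n)` possesses a limiting distribution: there is a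
nondecreasing, right-continuous `F : ℝ → [0,1]` with `F → 0` at `-∞` and `F → 1` at `+∞`,
such that at every continuity point `t` of `F`,
`(1/x) #{n ≤ x : ln h(n) ≤ t} → F(t)` as `x → ∞`. -/
theorem log_h_limiting_distribution :
    ∃ F : ℝ → ℝ,
      Monotone F ∧
      (∀ t : ℝ, ContinuousWithinAt F (Set.Ici t) t) ∧
      (∀ t : ℝ, 0 ≤ F t ∧ F t ≤ 1) ∧
      Tendsto F atBot (𝓝 0) ∧
      Tendsto F atTop (𝓝 1) ∧
      ∀ t : ℝ, ContinuousAt F t →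
        Tendsto (fun x : ℕ =>
            (((Finset.Icc 1 x).filter (fun n => Real.log (h n) ≤ t)).card : ℝ) / (x : ℝ))
          atTop (𝓝 (F t)) := by
  refine ⟨LHD.FF, LHD.FF_mono, LHD.FF_right_continuous,
    fun t => ⟨LHD.FF_nonneg t, LHD.FF_le_one t⟩, LHD.FF_atBot, LHD.FF_atTop, ?_⟩
  intro t hFt
  have hfun : ∀ x : ℕ,
      (((Finset.Icc 1 x).filter (fun n => Real.log (h n) ≤ t)).card : ℝ) / (x : ℝ)
        = (LHD.Acnt t x : ℝ) / x := fun x => rfl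
  rw [Metric.tendsto_nhds]
  intro ε hε
  -- upper bound
  have hFFt : LHD.FF t < LHD.FF t + ε / 2 := by linarith
  obtain ⟨y2, hy2⟩ : ∃ y2, LHD.Fy y2 t < LHD.FF t + ε / 2 := exists_lt_of_ciInf_lt hFFt
  have hupper : ∀ᶠ x : ℕ in atTop, (LHD.Acnt t x : ℝ) / x < LHD.FF t + ε := by
    have h1 : ∀ᶠ x : ℕ in atTop, (LHD.Ay y2 t x : ℝ) / x < LHD.FF t + ε :=
      (LHD.Ay_tendsto y2 t).eventually_lt_const (by linarith)
    filter_upwards [h1] with x hx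
    refine lt_of_le_of_lt ?_ hx
    apply div_le_div_of_nonneg_right ?_ (Nat.cast_nonneg x)
    exact_mod_cast LHD.Acnt_le_Ay t y2 x
  -- lower bound
  obtain ⟨δ, hδpos, hδ⟩ := Metric.continuousAt_iff.1 hFt (ε / 4) (by linarith)
  set s := t - δ / 2 with hs
  clear_value s
  have hst : s < t := by rw [hs]; linarith
  have hts : 0 < t - s := by linarith
  have hFs : LHD.FF t - ε / 4 < LHD.FF s := by
    have := hδ (x := s) (by rw [Real.dist_eq, hs]; rw [abs_of_nonpos (by linarith)]; linarith)
    rw [Real.dist_eq, abs_lt] at this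
    linarith [this.1]
  obtain ⟨y1, hy1⟩ := exists_nat_gt (12 / (ε * (t - s)))
  obtain ⟨N, hN⟩ := Metric.tendsto_atTop.1 (LHD.FF_tendsto_Fy s) (ε / 4) (by linarith)
  set y := max N (max 2 y1) with hy
  have hy2' : 2 ≤ y := le_max_of_le_right (le_max_left _ _)
  have hyN : N ≤ y := le_max_left _ _
  have hyy1 : y1 ≤ y := le_max_of_le_right (le_max_right _ _)
  have hypos : (0:ℝ) < (y:ℝ) := by
    have : 0 < y := by omega
    exact_mod_cast this
  have hy12 : 12 / (ε * (t - s)) < (y : ℝ) :=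
    hy1.trans_le (by exact_mod_cast hyy1)
  have htail : 3 / ((y:ℝ) * (t - s)) < ε / 4 := by
    rw [div_lt_iff₀ (by positivity)]
    rw [div_lt_iff₀ (by positivity)] at hy12
    nlinarith
  have hFys : LHD.FF s - ε / 4 < LHD.Fy y s := by
    have := hN y hyN
    rw [Real.dist_eq, abs_lt] at this
    linarith [this.1]
  have hlower : ∀ᶠ x : ℕ in atTop, LHD.FF t - ε < (LHD.Acnt t x : ℝ) / x := by
    have h1 : ∀ᶠ x : ℕ in atTop, LHD.Fy y s - ε / 4 < (LHD.Ay y s x : ℝ) / x :=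
      (LHD.Ay_tendsto y s).eventually_const_lt (by linarith)
    filter_upwards [h1, eventually_ge_atTop 1] with x hx hx1
    have hxR : (0:ℝ) < (x:ℝ) := by exact_mod_cast hx1
    set c3 := ((Finset.Icc 1 x).filter (fun n => t - s < LHD.tl y n)).card with hc3
    have hA : (LHD.Ay y s x : ℝ) ≤ (LHD.Acnt t x : ℝ) + (c3 : ℝ) := by
      exact_mod_cast LHD.Ay_le y x hst
    have hm := LHD.tail_card_le hy2' x hts
    have hc3x : (c3 : ℝ) / x ≤ 3 / ((y:ℝ) * (t - s)) := by
      rw [div_le_div_iff₀ hxR (by positivity)]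
      have h2 := mul_le_mul_of_nonneg_right hm hypos.le
      rw [div_mul_cancel₀ _ hypos.ne'] at h2
      nlinarith
    have hdiv : (LHD.Ay y s x : ℝ) / x ≤ (LHD.Acnt t x : ℝ) / x + (c3 : ℝ) / x := by
      rw [← add_div]
      exact div_le_div_of_nonneg_right hA hxR.le
    linarith
  filter_upwards [hupper, hlower] with x hxu hxl
  rw [hfun x, Real.dist_eq, abs_lt]
  constructor <;> linarith
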